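/- Let μ̃, ν̃ be probability measures on ℝ^d with finite second moments such that an optimal coupling γ between them for the squared-Euclidean cost exists, and suppose the barycentric projection T_γ satisfies T_γ # μ̃ = ν̃ (i.e., T_γ is a transport map). Then the coupling (Id, T_γ) # μ̃ is optimal, namely ∫‖x − T_γ(x)‖² dμ̃(x) = W₂²(μ̃, ν̃). -/

import Mathlib

open MeasureTheory

/-- Squared 2-Wasserstein distance, as the infimum of the squared-Euclidean transport
cost over all couplings. -/
noncomputable def W2sq {d : ℕ}
    (μ ν : Measure (EuclideanSpace ℝ (Fin d))) : ℝ :=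
  sInf {c : ℝ | ∃ π : Measure (EuclideanSpace ℝ (Fin d) × EuclideanSpace ℝ (Fin d)),
    π.map Prod.fst = μ ∧ π.map Prod.snd = ν ∧ c = ∫ p, ‖p.1 - p.2‖ ^ 2 ∂π}

/-- If the barycentric projection `Tγ` of an optimal coupling `γ` pushes `μ̃` to `ν̃`,
then `(Id, Tγ) # μ̃` is optimal: `∫‖x − Tγ(x)‖² dμ̃ = W₂²(μ̃, ν̃)`. -/
theorem stmt19 {d : ℕ} (μt νt : Measure (EuclideanSpace ℝ (Fin d)))
    [IsProbabilityMeasure μt] [IsProbabilityMeasure νt]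
    (h2μ : MemLp (id : EuclideanSpace ℝ (Fin d) → EuclideanSpace ℝ (Fin d)) 2 μt)
    (h2ν : MemLp (id : EuclideanSpace ℝ (Fin d) → EuclideanSpace ℝ (Fin d)) 2 νt)
    (γ : Measure (EuclideanSpace ℝ (Fin d) × EuclideanSpace ℝ (Fin d)))
    [IsProbabilityMeasure γ]
    (hγ1 : γ.map Prod.fst = μt) (hγ2 : γ.map Prod.snd = νt)
    (hγopt : ∫ p, ‖p.1 - p.2‖ ^ 2 ∂γ = W2sq μt νt)
    (Tγ : EuclideanSpace ℝ (Fin d) → EuclideanSpace ℝ (Fin d)) (hTγm : Measurable Tγ)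
    (hTγ : (fun p => Tγ p.1) =ᵐ[γ]
      γ[(fun p => p.2) | MeasurableSpace.comap Prod.fst inferInstance])
    (hpush : μt.map Tγ = νt) :
    ∫ x, ‖x - Tγ x‖ ^ 2 ∂μt = W2sq μt νt := by
  have hm : (MeasurableSpace.comap
      (Prod.fst : EuclideanSpace ℝ (Fin d) × EuclideanSpace ℝ (Fin d) → EuclideanSpace ℝ (Fin d))
      inferInstance) ≤ Prod.instMeasurableSpace := measurable_fst.comap_le
  -- Memℒp facts
  have hfst : MemLp (fun p : EuclideanSpace ℝ (Fin d) × EuclideanSpace ℝ (Fin d) => p.1) 2 γ := by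
    have := h2μ; rw [← hγ1] at this
    exact (memLp_map_measure_iff aestronglyMeasurable_id measurable_fst.aemeasurable).mp this
  have hsnd : MemLp (fun p : EuclideanSpace ℝ (Fin d) × EuclideanSpace ℝ (Fin d) => p.2) 2 γ := by
    have := h2ν; rw [← hγ2] at this
    exact (memLp_map_measure_iff aestronglyMeasurable_id measurable_snd.aemeasurable).mp this
  have hT1 : MemLp Tγ 2 μt := by
    have := h2ν; rw [← hpush] at this
    simpa using (memLp_map_measure_iff aestronglyMeasurable_id hTγm.aemeasurable).mp this
  have hTfst : MemLp (fun p : EuclideanSpace ℝ (Fin d) × EuclideanSpace ℝ (Fin d) => Tγ p.1) 2 γ := by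
    have := hT1; rw [← hγ1] at this
    exact (memLp_map_measure_iff this.aestronglyMeasurable measurable_fst.aemeasurable).mp this
  -- Lp elements
  set F : Lp (EuclideanSpace ℝ (Fin d)) 2 γ := hsnd.toLp _ with hF_def
  set G : Lp (EuclideanSpace ℝ (Fin d)) 2 γ := hfst.toLp _ with hG_def
  -- the conditional expectation agrees with condexpL2
  have hCE : (condExpL2 (EuclideanSpace ℝ (Fin d)) ℝ hm F : (EuclideanSpace ℝ (Fin d) × EuclideanSpace ℝ (Fin d)) → EuclideanSpace ℝ (Fin d)) =ᵐ[γ]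
      γ[(fun p : EuclideanSpace ℝ (Fin d) × EuclideanSpace ℝ (Fin d) => p.2) | MeasurableSpace.comap Prod.fst inferInstance] := by
    refine ae_eq_condExp_of_forall_setIntegral_eq hm (hsnd.integrable (by norm_num))
      (fun s _ _ => (integrable_condExpL2_of_isFiniteMeasure hm).integrableOn)
      (fun s hs hμs => ?_) (aestronglyMeasurable_condExpL2 hm F)
    rw [integral_condExpL2_eq hm F hs hμs.ne]
    exact setIntegral_congr_ae (hm s hs) ((hsnd.coeFn_toLp).mono fun x hx _ => hx)
  have hTγ' : (fun p : EuclideanSpace ℝ (Fin d) × EuclideanSpace ℝ (Fin d) => Tγ p.1) =ᵐ[γ] (condExpL2 (EuclideanSpace ℝ (Fin d)) ℝ hm F : (EuclideanSpace ℝ (Fin d) × EuclideanSpace ℝ (Fin d)) → EuclideanSpace ℝ (Fin d)) :=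
    hTγ.trans hCE.symm
  -- m-measurability of G
  have hGm : AEStronglyMeasurable[MeasurableSpace.comap Prod.fst inferInstance] (G : (EuclideanSpace ℝ (Fin d) × EuclideanSpace ℝ (Fin d)) → EuclideanSpace ℝ (Fin d)) γ := by
    refine AEStronglyMeasurable.congr ?_ (hfst.coeFn_toLp).symm
    exact StronglyMeasurable.aestronglyMeasurable
      (Measurable.stronglyMeasurable (by exact measurable_iff_comap_le.mpr le_rfl))
  -- key cross-term identity
  have key : ∫ p, (inner ℝ p.1 p.2 : ℝ) ∂γ = ∫ p, (inner ℝ p.1 (Tγ p.1) : ℝ) ∂γ := by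
    have h1 : (inner ℝ (condExpL2 (EuclideanSpace ℝ (Fin d)) ℝ hm F : Lp (EuclideanSpace ℝ (Fin d)) 2 γ) G : ℝ) = inner ℝ F G :=
      inner_condExpL2_eq_inner_fun hm F G hGm
    rw [L2.inner_def, L2.inner_def] at h1
    have h2 : ∫ p, (inner ℝ p.1 p.2 : ℝ) ∂γ = ∫ p, (inner ℝ (F p) (G p) : ℝ) ∂γ := by
      refine integral_congr_ae ?_
      filter_upwards [hsnd.coeFn_toLp, hfst.coeFn_toLp] with p h1 h2
      rw [h1, h2, real_inner_comm]
    have h3 : ∫ p, (inner ℝ p.1 (Tγ p.1) : ℝ) ∂γ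
        = ∫ p, (inner ℝ ((condExpL2 (EuclideanSpace ℝ (Fin d)) ℝ hm F : Lp (EuclideanSpace ℝ (Fin d)) 2 γ) p) (G p) : ℝ) ∂γ := by
      refine integral_congr_ae ?_
      filter_upwards [hTγ', hfst.coeFn_toLp] with p h1 h2
      rw [← h1, h2, real_inner_comm]
    rw [h2, h3, h1]
  -- integrabilities
  have I1 : Integrable (fun p : EuclideanSpace ℝ (Fin d) × EuclideanSpace ℝ (Fin d) => ‖p.1‖ ^ 2) γ :=
    (memLp_two_iff_integrable_sq_norm hfst.aestronglyMeasurable).mp hfst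
  have I2 : Integrable (fun p : EuclideanSpace ℝ (Fin d) × EuclideanSpace ℝ (Fin d) => ‖p.2‖ ^ 2) γ :=
    (memLp_two_iff_integrable_sq_norm hsnd.aestronglyMeasurable).mp hsnd
  have IT : Integrable (fun p : EuclideanSpace ℝ (Fin d) × EuclideanSpace ℝ (Fin d) => ‖Tγ p.1‖ ^ 2) γ :=
    (memLp_two_iff_integrable_sq_norm hTfst.aestronglyMeasurable).mp hTfst
  have Ic : Integrable (fun p : EuclideanSpace ℝ (Fin d) × EuclideanSpace ℝ (Fin d) => (inner ℝ p.1 p.2 : ℝ)) γ := by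
    refine (L2.integrable_inner G F).congr ?_
    filter_upwards [hsnd.coeFn_toLp, hfst.coeFn_toLp] with p h1 h2
    rw [h1, h2]
  have IcT : Integrable (fun p : EuclideanSpace ℝ (Fin d) × EuclideanSpace ℝ (Fin d) => (inner ℝ p.1 (Tγ p.1) : ℝ)) γ := by
    refine (L2.integrable_inner G (hTfst.toLp _)).congr ?_
    filter_upwards [hTfst.coeFn_toLp, hfst.coeFn_toLp] with p h1 h2
    rw [h1, h2]
  -- expand the two cost integrals
  have expand : ∀ (f g : (EuclideanSpace ℝ (Fin d) × EuclideanSpace ℝ (Fin d)) → EuclideanSpace ℝ (Fin d)), Integrable (fun p => ‖f p‖ ^ 2) γ →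
      Integrable (fun p => ‖g p‖ ^ 2) γ →
      Integrable (fun p => (inner ℝ (f p) (g p) : ℝ)) γ →
      ∫ p, ‖f p - g p‖ ^ 2 ∂γ
        = ∫ p, ‖f p‖ ^ 2 ∂γ - 2 * ∫ p, (inner ℝ (f p) (g p) : ℝ) ∂γ + ∫ p, ‖g p‖ ^ 2 ∂γ := by
    intro f g hf hg hfg
    have : ∀ p, ‖f p - g p‖ ^ 2 = ‖f p‖ ^ 2 - 2 * (inner ℝ (f p) (g p) : ℝ) + ‖g p‖ ^ 2 :=
      fun p => norm_sub_sq_real _ _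
    have hsub : Integrable (fun p => ‖f p‖ ^ 2 - 2 * (inner ℝ (f p) (g p) : ℝ)) γ :=
      hf.sub (hfg.const_mul 2)
    simp_rw [this]
    rw [integral_add hsub hg, integral_sub hf (hfg.const_mul 2), integral_const_mul]
  -- transfer ∫‖Tγ p.1‖² over γ and ∫‖p.2‖² over γ to νt
  have hT2eq : ∫ p, ‖Tγ p.1‖ ^ 2 ∂γ = ∫ p, ‖p.2‖ ^ 2 ∂γ := by
    have e1 : ∫ p : EuclideanSpace ℝ (Fin d) × EuclideanSpace ℝ (Fin d), ‖Tγ p.1‖ ^ 2 ∂γ = ∫ x, ‖Tγ x‖ ^ 2 ∂μt := by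
      rw [← hγ1, integral_map measurable_fst.aemeasurable]
      exact (hTγm.norm.pow_const 2).aestronglyMeasurable
    have e2 : ∫ x, ‖Tγ x‖ ^ 2 ∂μt = ∫ y, ‖y‖ ^ 2 ∂νt := by
      rw [← hpush, integral_map hTγm.aemeasurable]
      exact (measurable_id.norm.pow_const 2).aestronglyMeasurable
    have e3 : ∫ p : EuclideanSpace ℝ (Fin d) × EuclideanSpace ℝ (Fin d), ‖p.2‖ ^ 2 ∂γ = ∫ y, ‖y‖ ^ 2 ∂νt := by
      rw [← hγ2, integral_map measurable_snd.aemeasurable]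
      exact (measurable_id.norm.pow_const 2).aestronglyMeasurable
    rw [e1, e2, e3]
  -- transfer the LHS to an integral over γ
  have hLHS : ∫ x, ‖x - Tγ x‖ ^ 2 ∂μt = ∫ p : EuclideanSpace ℝ (Fin d) × EuclideanSpace ℝ (Fin d), ‖p.1 - Tγ p.1‖ ^ 2 ∂γ := by
    rw [← hγ1, integral_map measurable_fst.aemeasurable]
    exact ((measurable_id.sub hTγm).norm.pow_const 2).aestronglyMeasurable
  rw [hLHS, expand (fun p => p.1) (fun p => Tγ p.1) I1 IT IcT, ← key, hT2eq,
    ← expand (fun p => p.1) (fun p => p.2) I1 I2 Ic]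
  exact hγopt
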